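/- arXiv:2510.00679 — 3 statements merged into one kernel-verified Lean document; each statement's English description precedes it below -/
import Mathlib

section
/- In the polynomial ring ℂ[t₁,t₂], the ideal generated by p₁ = t₁(2t₁ − 4t₂ + 1) and p₂ = t₂(2t₂ − 4t₁ + 1) equals the intersection of the four ideals I₁ = ⟨t₁, t₂⟩, I₂ = ⟨t₁, t₂ + 1/2⟩, I₃ = ⟨t₁ + 1/2, t₂⟩, and I₄ = ⟨t₁ − 1/2, t₂ − 1/2⟩. -/
open MvPolynomial

noncomputable def t₁ : MvPolynomial (Fin 2) ℂ := X 0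
noncomputable def t₂ : MvPolynomial (Fin 2) ℂ := X 1

lemma two_eq_C : (2 : MvPolynomial (Fin 2) ℂ) = C 2 := (map_ofNat C 2).symm

lemma half_mul_two : (C (1/2 : ℂ) : MvPolynomial (Fin 2) ℂ) * 2 = 1 := by
  rw [two_eq_C, ← C_mul]; norm_num

lemma C_six : (C (6 : ℂ) : MvPolynomial (Fin 2) ℂ) = 6 := map_ofNat C 6

lemma mem_of_C_mul_mem {I : Ideal (MvPolynomial (Fin 2) ℂ)}
    {x : MvPolynomial (Fin 2) ℂ} (c : ℂ) (hc : c ≠ 0) (h : C c * x ∈ I) : x ∈ I := by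
  have h2 := I.mul_mem_left (C c⁻¹) h
  rwa [← mul_assoc, ← C_mul, inv_mul_cancel₀ hc, C_1, one_mul] at h2

/-- In ℂ[t₁,t₂], ⟨t₁(2t₁ − 4t₂ + 1), t₂(2t₂ − 4t₁ + 1)⟩
= ⟨t₁,t₂⟩ ∩ ⟨t₁,t₂+1/2⟩ ∩ ⟨t₁+1/2,t₂⟩ ∩ ⟨t₁−1/2,t₂−1/2⟩. -/
theorem stmt_1 :
    Ideal.span {t₁ * (2 * t₁ - 4 * t₂ + 1), t₂ * (2 * t₂ - 4 * t₁ + 1)} =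
      Ideal.span {t₁, t₂} ⊓
        Ideal.span {t₁, t₂ + C (1/2 : ℂ)} ⊓
        Ideal.span {t₁ + C (1/2 : ℂ), t₂} ⊓
        Ideal.span {t₁ - C (1/2 : ℂ), t₂ - C (1/2 : ℂ)} := by
  have half := half_mul_two
  -- rescale generators to integer coefficients
  have hI2 : Ideal.span {t₁, t₂ + C (1/2 : ℂ)} = Ideal.span {t₁, 2*t₂+1} := by
    apply le_antisymm <;> rw [Ideal.span_le] <;> rintro x (rfl | rfl)
    · exact Ideal.mem_span_pair.mpr ⟨1, 0, by ring⟩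
    · exact Ideal.mem_span_pair.mpr ⟨0, C (1/2 : ℂ), by linear_combination t₂ * half⟩
    · exact Ideal.mem_span_pair.mpr ⟨1, 0, by ring⟩
    · exact Ideal.mem_span_pair.mpr ⟨0, 2, by linear_combination half⟩
  have hI3 : Ideal.span {t₁ + C (1/2 : ℂ), t₂} = Ideal.span {2*t₁+1, t₂} := by
    apply le_antisymm <;> rw [Ideal.span_le] <;> rintro x (rfl | rfl)
    · exact Ideal.mem_span_pair.mpr ⟨C (1/2 : ℂ), 0, by linear_combination t₁ * half⟩
    · exact Ideal.mem_span_pair.mpr ⟨0, 1, by ring⟩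
    · exact Ideal.mem_span_pair.mpr ⟨2, 0, by linear_combination half⟩
    · exact Ideal.mem_span_pair.mpr ⟨0, 1, by ring⟩
  have hI4 : Ideal.span {t₁ - C (1/2 : ℂ), t₂ - C (1/2 : ℂ)}
      = Ideal.span {2*t₁-1, 2*t₂-1} := by
    apply le_antisymm <;> rw [Ideal.span_le] <;> rintro x (rfl | rfl)
    · exact Ideal.mem_span_pair.mpr ⟨C (1/2 : ℂ), 0, by linear_combination t₁ * half⟩
    · exact Ideal.mem_span_pair.mpr ⟨0, C (1/2 : ℂ), by linear_combination t₂ * half⟩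
    · exact Ideal.mem_span_pair.mpr ⟨2, 0, by linear_combination -half⟩
    · exact Ideal.mem_span_pair.mpr ⟨0, 2, by linear_combination -half⟩
  rw [hI2, hI3, hI4]
  -- pairwise coprimality
  have h12 : Ideal.span {t₁, t₂} ⊔ Ideal.span {t₁, 2*t₂+1} = ⊤ := by
    rw [Ideal.eq_top_iff_one]
    exact Submodule.mem_sup.mpr ⟨-(2*t₂), Ideal.mem_span_pair.mpr ⟨0, -2, by ring⟩,
      2*t₂+1, Ideal.mem_span_pair.mpr ⟨0, 1, by ring⟩, by ring⟩
  have h13 : Ideal.span {t₁, t₂} ⊔ Ideal.span {2*t₁+1, t₂} = ⊤ := by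
    rw [Ideal.eq_top_iff_one]
    exact Submodule.mem_sup.mpr ⟨-(2*t₁), Ideal.mem_span_pair.mpr ⟨-2, 0, by ring⟩,
      2*t₁+1, Ideal.mem_span_pair.mpr ⟨1, 0, by ring⟩, by ring⟩
  have h14 : Ideal.span {t₁, t₂} ⊔ Ideal.span {2*t₁-1, 2*t₂-1} = ⊤ := by
    rw [Ideal.eq_top_iff_one]
    exact Submodule.mem_sup.mpr ⟨2*t₁, Ideal.mem_span_pair.mpr ⟨2, 0, by ring⟩,
      -(2*t₁-1), Ideal.mem_span_pair.mpr ⟨-1, 0, by ring⟩, by ring⟩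
  have h23 : Ideal.span {t₁, 2*t₂+1} ⊔ Ideal.span {2*t₁+1, t₂} = ⊤ := by
    rw [Ideal.eq_top_iff_one]
    exact Submodule.mem_sup.mpr ⟨-(2*t₁), Ideal.mem_span_pair.mpr ⟨-2, 0, by ring⟩,
      2*t₁+1, Ideal.mem_span_pair.mpr ⟨1, 0, by ring⟩, by ring⟩
  have h24 : Ideal.span {t₁, 2*t₂+1} ⊔ Ideal.span {2*t₁-1, 2*t₂-1} = ⊤ := by
    rw [Ideal.eq_top_iff_one]
    exact Submodule.mem_sup.mpr
      ⟨C (1/2 : ℂ) * (2*t₂+1), Ideal.mem_span_pair.mpr ⟨0, C (1/2 : ℂ), by ring⟩,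
       -(C (1/2 : ℂ) * (2*t₂-1)), Ideal.mem_span_pair.mpr ⟨0, -C (1/2 : ℂ), by ring⟩,
       by linear_combination half⟩
  have h34 : Ideal.span {2*t₁+1, t₂} ⊔ Ideal.span {2*t₁-1, 2*t₂-1} = ⊤ := by
    rw [Ideal.eq_top_iff_one]
    exact Submodule.mem_sup.mpr ⟨2*t₂, Ideal.mem_span_pair.mpr ⟨0, 2, by ring⟩,
      -(2*t₂-1), Ideal.mem_span_pair.mpr ⟨0, -1, by ring⟩, by ring⟩
  have c13 := Ideal.isCoprime_iff_sup_eq.mpr h13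
  have c14 := Ideal.isCoprime_iff_sup_eq.mpr h14
  have c23 := Ideal.isCoprime_iff_sup_eq.mpr h23
  have c24 := Ideal.isCoprime_iff_sup_eq.mpr h24
  have c34 := Ideal.isCoprime_iff_sup_eq.mpr h34
  have h123 : (Ideal.span {t₁, t₂} * Ideal.span {t₁, 2*t₂+1}) ⊔ Ideal.span {2*t₁+1, t₂}
      = ⊤ := (IsCoprime.mul_left c13 c23).sup_eq
  have h1234 : (Ideal.span {t₁, t₂} * Ideal.span {t₁, 2*t₂+1} * Ideal.span {2*t₁+1, t₂})
      ⊔ Ideal.span {2*t₁-1, 2*t₂-1} = ⊤ :=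
    (IsCoprime.mul_left (IsCoprime.mul_left c14 c24) c34).sup_eq
  rw [← Ideal.mul_eq_inf_of_coprime h12, ← Ideal.mul_eq_inf_of_coprime h123,
      ← Ideal.mul_eq_inf_of_coprime h1234]
  apply le_antisymm
  · -- span {p₁, p₂} ≤ product: product = intersection, check membership in each factor
    rw [Ideal.mul_eq_inf_of_coprime h1234, Ideal.mul_eq_inf_of_coprime h123,
        Ideal.mul_eq_inf_of_coprime h12]
    refine le_inf (le_inf (le_inf ?_ ?_) ?_) ?_ <;>
      rw [Ideal.span_le] <;> rintro x (rfl | rfl)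
    · exact Ideal.mem_span_pair.mpr ⟨2*t₁-4*t₂+1, 0, by ring⟩
    · exact Ideal.mem_span_pair.mpr ⟨0, 2*t₂-4*t₁+1, by ring⟩
    · exact Ideal.mem_span_pair.mpr ⟨2*t₁-4*t₂+1, 0, by ring⟩
    · exact Ideal.mem_span_pair.mpr ⟨-(4*t₂), t₂, by ring⟩
    · exact Ideal.mem_span_pair.mpr ⟨t₁, -(4*t₁), by ring⟩
    · exact Ideal.mem_span_pair.mpr ⟨0, 2*t₂-4*t₁+1, by ring⟩
    · exact Ideal.mem_span_pair.mpr ⟨t₁, -(2*t₁), by ring⟩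
    · exact Ideal.mem_span_pair.mpr ⟨-(2*t₂), t₂, by ring⟩
  · -- product ≤ span {p₁, p₂}
    rw [mul_assoc, Ideal.span_pair_mul_span_pair, Ideal.span_pair_mul_span_pair,
        Ideal.span_mul_span', Ideal.span_le]
    rintro x hx
    obtain ⟨s, hs, t, ht, rfl⟩ := hx
    simp only [Set.mem_insert_iff, Set.mem_singleton_iff] at hs ht
    have mem6 : ∀ q1 q2 x : MvPolynomial (Fin 2) ℂ,
        (q1 * (t₁ * (2 * t₁ - 4 * t₂ + 1)) + q2 * (t₂ * (2 * t₂ - 4 * t₁ + 1)) = 6 * x) →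
        x ∈ Ideal.span {t₁ * (2 * t₁ - 4 * t₂ + 1), t₂ * (2 * t₂ - 4 * t₁ + 1)} := by
      intro q1 q2 x h
      refine mem_of_C_mul_mem 6 (by norm_num) ?_
      exact Ideal.mem_span_pair.mpr ⟨q1, q2, by rw [C_six]; linear_combination h⟩
    rcases hs with rfl | rfl | rfl | rfl <;> rcases ht with rfl | rfl | rfl | rfl
    · exact mem6 (-(8*t₂) - 16*t₂^2 - 6*t₁ + 24*t₁*t₂ + 12*t₁^2) (8*t₁ - 32*t₁*t₂) _
        (by ring)
    · exact mem6 (-(4*t₂) - 8*t₂^2 - 6*t₁ + 12*t₁*t₂) (4*t₁ - 16*t₁*t₂) _ (by ring)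
    · exact mem6 (-(2*t₂) - 4*t₂^2 + 6*t₁*t₂) (2*t₁ - 8*t₁*t₂) _ (by ring)
    · exact mem6 (-t₂ - 2*t₂^2) (t₁ - 4*t₁*t₂) _ (by ring)
    · exact mem6 (-6 - 20*t₂ - 16*t₂^2 + 12*t₁ + 24*t₁*t₂) (-(16*t₁) - 32*t₁*t₂) _
        (by ring)
    · exact mem6 (-6 - 16*t₂ - 8*t₂^2) (-(8*t₁) - 16*t₁*t₂) _ (by ring)
    · exact mem6 (-(2*t₂) - 4*t₂^2) (-(4*t₁) - 8*t₁*t₂) _ (by ring)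
    · exact mem6 (-(4*t₂) - 8*t₂^2) (-(2*t₁) - 4*t₁*t₂) _ (by ring)
    · exact mem6 (-(6*t₂) - 8*t₂^2 + 12*t₁*t₂) (-(16*t₁*t₂)) _ (by ring)
    · exact mem6 (-(6*t₂) - 4*t₂^2) (-(8*t₁*t₂)) _ (by ring)
    · exact mem6 (-(2*t₂^2)) (-(4*t₁*t₂)) _ (by ring)
    · exact mem6 (-(4*t₂^2)) (-(2*t₁*t₂)) _ (by ring)
    · exact mem6 (-(12*t₂) - 8*t₂^2) (-6 - 12*t₁ - 16*t₁*t₂) _ (by ring)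
    · exact mem6 (-(24*t₂) - 16*t₂^2) (-6 + 12*t₂ - 12*t₁ - 8*t₁*t₂) _ (by ring)
    · exact mem6 (-(8*t₂^2)) (-(6*t₂) - 4*t₁*t₂) _ (by ring)
    · exact mem6 (-(16*t₂^2)) (-(6*t₂) + 12*t₂^2 - 8*t₁*t₂) _ (by ring)
end

section
/- The quotient ring ℂ[t₁,t₂]/⟨p₁, p₂⟩, where p₁ = t₁(2t₁ − 4t₂ + 1) and p₂ = t₂(2t₂ − 4t₁ + 1), is isomorphic as a ℂ-algebra to the product ℂ × ℂ × ℂ × ℂ; in particular it is a finite-dimensional semisimple commutative ℂ-algebra of dimension 4 over ℂ. -/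
open MvPolynomial

/-- The ideal ⟨p₁, p₂⟩ with p₁ = t₁(2t₁ − 4t₂ + 1), p₂ = t₂(2t₂ − 4t₁ + 1). -/
noncomputable def J : Ideal (MvPolynomial (Fin 2) ℂ) :=
  Ideal.span {t₁ * (2 * t₁ - 4 * t₂ + 1), t₂ * (2 * t₂ - 4 * t₁ + 1)}

noncomputable def φ : MvPolynomial (Fin 2) ℂ →ₐ[ℂ] ℂ × ℂ × ℂ × ℂ :=
  (aeval ![0,0]).prod ((aeval ![0,-(1/2)]).prod
    ((aeval ![-(1/2),0]).prod (aeval ![1/2,1/2])))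

lemma φ_surj : Function.Surjective φ := by
  rintro ⟨a, b, c, d⟩
  refine ⟨C a * (-((2*t₁+1)*(2*t₂+1)*(t₁+t₂-1)))
        + C b * (C (4/3) * ((2*t₁+1)*t₂*(t₁+t₂-1)))
        + C c * (C (4/3) * ((2*t₂+1)*t₁*(t₁+t₂-1)))
        + C d * (4*(t₁*t₂)), ?_⟩
  simp [φ, t₁, t₂, Prod.ext_iff]
  norm_num

lemma J_le_ker : ∀ x ∈ J, φ x = 0 := by
  intro x hx
  rw [J] at hx
  refine (Ideal.span_le (I := RingHom.ker (φ : MvPolynomial (Fin 2) ℂ →+* ℂ × ℂ × ℂ × ℂ))).mpr ?_ hx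
  rintro p hp
  simp only [Set.mem_insert_iff, Set.mem_singleton_iff] at hp
  rcases hp with rfl | rfl <;>
  · simp [RingHom.mem_ker, φ, t₁, t₂, Prod.ext_iff]
    norm_num

section Quot

local notation "Q" => MvPolynomial (Fin 2) ℂ ⧸ J

noncomputable abbrev mkJ : MvPolynomial (Fin 2) ℂ →+* Q := Ideal.Quotient.mk J

noncomputable abbrev aa : Q := mkJ t₁
noncomputable abbrev bb : Q := mkJ t₂

lemma memJ_1 : t₁*t₁*2 - (t₁*t₂*4 - t₁) ∈ J := by
  rw [J, Ideal.mem_span_pair]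
  exact ⟨1, 0, by ring⟩

lemma memJ_2 : t₂*t₂*2 - (t₁*t₂*4 - t₂) ∈ J := by
  rw [J, Ideal.mem_span_pair]
  exact ⟨0, 1, by ring⟩

lemma memJ_3 : t₁*t₁*t₂*6 - t₁*t₂*3 ∈ J := by
  rw [J, Ideal.mem_span_pair]
  exact ⟨-t₂, -2*t₁, by ring⟩

lemma memJ_4 : t₁*t₂*t₂*6 - t₁*t₂*3 ∈ J := by
  rw [J, Ideal.mem_span_pair]
  exact ⟨-2*t₂, -t₁, by ring⟩

lemma q1 : aa*aa*2 = aa*bb*4 - aa := by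
  have := Ideal.Quotient.eq.mpr (show t₁*t₁*2 - (t₁*t₂*4 - t₁) - 0 ∈ J by simpa using memJ_1)
  simpa [map_sub, map_mul, map_ofNat, sub_eq_zero] using this

lemma q2 : bb*bb*2 = aa*bb*4 - bb := by
  have := Ideal.Quotient.eq.mpr (show t₂*t₂*2 - (t₁*t₂*4 - t₂) - 0 ∈ J by simpa using memJ_2)
  simpa [map_sub, map_mul, map_ofNat, sub_eq_zero] using this

lemma q3 : aa*aa*bb*6 = aa*bb*3 := by
  have := Ideal.Quotient.eq.mpr (show t₁*t₁*t₂*6 - t₁*t₂*3 - 0 ∈ J by simpa using memJ_3)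
  simpa [map_sub, map_mul, map_ofNat, sub_eq_zero] using this

lemma q4 : aa*bb*bb*6 = aa*bb*3 := by
  have := Ideal.Quotient.eq.mpr (show t₁*t₂*t₂*6 - t₁*t₂*3 - 0 ∈ J by simpa using memJ_4)
  simpa [map_sub, map_mul, map_ofNat, sub_eq_zero] using this

end Quot

section Span

local notation "Q" => MvPolynomial (Fin 2) ℂ ⧸ J

lemma numsmul (n : ℕ) [n.AtLeastTwo] (x : Q) :
    (OfNat.ofNat n : ℂ) • x = x * OfNat.ofNat n :=
  (Algebra.smul_def (OfNat.ofNat n : ℂ) x).trans (by rw [map_ofNat, mul_comm])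

lemma smul_of_eq (c : ℂ) (hc : c ≠ 0) {x y : Q} (h : c • x = y) : x = c⁻¹ • y := by
  rw [← h, smul_smul, inv_mul_cancel₀ hc, one_smul]

noncomputable def S : Submodule ℂ Q :=
  Submodule.span ℂ ({1, aa, bb, aa*bb} : Set Q)

lemma one_mem_S : (1:Q) ∈ S := Submodule.subset_span (by simp)
lemma aa_mem_S : aa ∈ S := Submodule.subset_span (by simp)
lemma bb_mem_S : bb ∈ S := Submodule.subset_span (by simp)
lemma ab_mem_S : aa*bb ∈ S := Submodule.subset_span (by simp)

lemma aabb4_mem_S : aa*bb*4 ∈ S := by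
  rw [← numsmul 4]; exact S.smul_mem _ ab_mem_S

lemma aabb3_mem_S : aa*bb*3 ∈ S := by
  rw [← numsmul 3]; exact S.smul_mem _ ab_mem_S

lemma aa_sq_mem : aa*aa ∈ S := by
  have h : (2:ℂ) • (aa*aa) = aa*bb*4 - aa := by rw [numsmul]; exact q1
  rw [smul_of_eq 2 two_ne_zero h]
  exact S.smul_mem _ (S.sub_mem aabb4_mem_S aa_mem_S)

lemma bb_sq_mem : bb*bb ∈ S := by
  have h : (2:ℂ) • (bb*bb) = aa*bb*4 - bb := by rw [numsmul]; exact q2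
  rw [smul_of_eq 2 two_ne_zero h]
  exact S.smul_mem _ (S.sub_mem aabb4_mem_S bb_mem_S)

lemma aab_mem : aa*(aa*bb) ∈ S := by
  have h : (6:ℂ) • (aa*(aa*bb)) = aa*bb*3 := by rw [numsmul]; linear_combination q3
  rw [smul_of_eq 6 (by norm_num) h]
  exact S.smul_mem _ aabb3_mem_S

lemma abb_mem : bb*(aa*bb) ∈ S := by
  have h : (6:ℂ) • (bb*(aa*bb)) = aa*bb*3 := by rw [numsmul]; linear_combination q4
  rw [smul_of_eq 6 (by norm_num) h]
  exact S.smul_mem _ aabb3_mem_S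

lemma mul_aa_mem : ∀ x ∈ S, aa * x ∈ S := by
  intro x hx
  induction hx using Submodule.span_induction with
  | mem y hy =>
      simp only [Set.mem_insert_iff, Set.mem_singleton_iff] at hy
      rcases hy with rfl | rfl | rfl | rfl
      · rw [mul_one]; exact aa_mem_S
      · exact aa_sq_mem
      · exact ab_mem_S
      · exact aab_mem
  | zero => rw [mul_zero]; exact S.zero_mem
  | add y z _ _ hy hz => rw [mul_add]; exact S.add_mem hy hz
  | smul c y _ hy => rw [mul_smul_comm]; exact S.smul_mem c hy

lemma mul_bb_mem : ∀ x ∈ S, bb * x ∈ S := by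
  intro x hx
  induction hx using Submodule.span_induction with
  | mem y hy =>
      simp only [Set.mem_insert_iff, Set.mem_singleton_iff] at hy
      rcases hy with rfl | rfl | rfl | rfl
      · rw [mul_one]; exact bb_mem_S
      · rw [mul_comm]; exact ab_mem_S
      · exact bb_sq_mem
      · exact abb_mem
  | zero => rw [mul_zero]; exact S.zero_mem
  | add y z _ _ hy hz => rw [mul_add]; exact S.add_mem hy hz
  | smul c y _ hy => rw [mul_smul_comm]; exact S.smul_mem c hy

lemma mk_mem_S (f : MvPolynomial (Fin 2) ℂ) : mkJ f ∈ S := by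
  induction f using MvPolynomial.induction_on with
  | C r =>
      have : mkJ (C r) = r • (1:Q) :=
        ((Algebra.smul_def (r : ℂ) (1 : Q)).trans (mul_one _)).symm
      rw [this]; exact S.smul_mem r one_mem_S
  | add p q hp hq => rw [map_add]; exact S.add_mem hp hq
  | mul_X p n hp =>
      rw [map_mul]
      fin_cases n
      · rw [mul_comm]; exact mul_aa_mem _ hp
      · rw [mul_comm]; exact mul_bb_mem _ hp

lemma S_eq_top : S = ⊤ := by
  rw [eq_top_iff]
  rintro x -
  obtain ⟨f, rfl⟩ := Ideal.Quotient.mk_surjective x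
  exact mk_mem_S f

end Span

section Final

local notation "Q" => MvPolynomial (Fin 2) ℂ ⧸ J

noncomputable def ψ : Q →ₐ[ℂ] ℂ × ℂ × ℂ × ℂ :=
  Ideal.Quotient.liftₐ J φ J_le_ker

lemma ψ_mk (f : MvPolynomial (Fin 2) ℂ) : ψ (mkJ f) = φ f := by
  simp [ψ, mkJ]
  rfl

lemma ψ_surj : Function.Surjective ψ := by
  intro y
  obtain ⟨f, hf⟩ := φ_surj y
  exact ⟨mkJ f, by rw [ψ_mk, hf]⟩

instance : Module.Finite ℂ Q :=
  ⟨by rw [← S_eq_top]; exact Submodule.fg_span (Set.toFinite _)⟩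

lemma finrank_le : Module.finrank ℂ Q ≤ 4 := by
  classical
  have h1 : (⊤ : Submodule ℂ Q) = Submodule.span ℂ (↑({1, aa, bb, aa*bb} : Finset Q)) := by
    rw [← S_eq_top]; simp [S]
  have h2 := finrank_span_finset_le_card (R := ℂ) ({1, aa, bb, aa*bb} : Finset Q)
  have h3 : ({1, aa, bb, aa*bb} : Finset Q).card ≤ 4 := by
    apply le_trans (Finset.card_insert_le _ _)
    have := Finset.card_insert_le aa ({bb, aa*bb} : Finset Q)
    have := Finset.card_insert_le bb ({aa*bb} : Finset Q)
    simp at *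
    omega
  calc Module.finrank ℂ Q = Module.finrank ℂ (⊤ : Submodule ℂ Q) := (finrank_top ℂ Q).symm
    _ ≤ 4 := by rw [h1]; exact le_trans h2 h3

lemma finrank_target : Module.finrank ℂ (ℂ × ℂ × ℂ × ℂ) = 4 := by
  simp [Module.finrank_prod, Module.finrank_self]

lemma ψ_bij : Function.Bijective ψ ∧ Module.finrank ℂ Q = 4 := by
  have hrn := LinearMap.finrank_range_add_finrank_ker (ψ.toLinearMap : Q →ₗ[ℂ] ℂ × ℂ × ℂ × ℂ)
  have hr : LinearMap.range ψ.toLinearMap = ⊤ := LinearMap.range_eq_top.mpr ψ_surj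
  rw [hr, finrank_top, finrank_target] at hrn
  have hk : Module.finrank ℂ (LinearMap.ker ψ.toLinearMap) = 0 := by
    have := finrank_le
    omega
  have hker : LinearMap.ker ψ.toLinearMap = ⊥ := Submodule.finrank_eq_zero.mp hk
  refine ⟨⟨?_, ψ_surj⟩, by omega⟩
  exact LinearMap.ker_eq_bot.mp hker

end Final

/-- ℂ[t₁,t₂]/⟨p₁,p₂⟩ is isomorphic as a ℂ-algebra to ℂ × ℂ × ℂ × ℂ;
in particular it is 4-dimensional over ℂ. -/
theorem stmt_3 :
    Nonempty ((MvPolynomial (Fin 2) ℂ ⧸ J) ≃ₐ[ℂ] (ℂ × ℂ × ℂ × ℂ)) ∧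
      Module.finrank ℂ (MvPolynomial (Fin 2) ℂ ⧸ J) = 4 := by
  obtain ⟨hbij, hrk⟩ := ψ_bij
  exact ⟨⟨AlgEquiv.ofBijective ψ hbij⟩, hrk⟩
end

section
/- In the polynomial ring ℂ[t₁,t₂], the ideal generated by p₁ = t₁(2t₁ − 4t₂ + 1) and p₂ = t₂(2t₂ − 4t₁ + 1) is a radical ideal. -/
open MvPolynomial

namespace Stmt4Aux

local notation "R" => MvPolynomial (Fin 2) ℂ

noncomputable def P₁ : R := X 0 * (2 * X 0 - 4 * X 1 + 1)
noncomputable def P₂ : R := X 1 * (2 * X 1 - 4 * X 0 + 1)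

noncomputable def I : Ideal R := Ideal.span {P₁, P₂}

lemma sub_eval_mem (a b : ℂ) (s : Set R)
    (h0 : (X 0 - C a : R) ∈ Ideal.span s) (h1 : (X 1 - C b : R) ∈ Ideal.span s)
    (f : R) : f - C (eval ![a, b] f) ∈ Ideal.span s := by
  induction f using MvPolynomial.induction_on with
  | C c => simp
  | add p q hp hq =>
      have := Ideal.add_mem _ hp hq
      simpa [map_add, sub_add_sub_comm] using this
  | mul_X p i hp =>
      have hXi : (X i - C (![a, b] i) : R) ∈ Ideal.span s := by
        fin_cases i <;> simpa using ‹_›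
      have : p * X i - C (eval ![a, b] (p * X i))
          = p * (X i - C (![a, b] i)) + C (![a, b] i) * (p - C (eval ![a, b] p)) := by
        rw [map_mul, eval_X, map_mul]; ring
      rw [this]
      exact Ideal.add_mem _ (Ideal.mul_mem_left _ _ hXi) (Ideal.mul_mem_left _ _ hp)

lemma vi_le (a b : ℂ) (s : Set R)
    (h0 : (X 0 - C a : R) ∈ Ideal.span s) (h1 : (X 1 - C b : R) ∈ Ideal.span s) :
    vanishingIdeal ℂ ({![a, b]} : Set (Fin 2 → ℂ)) ≤ Ideal.span s := by
  intro f hf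
  rw [mem_vanishingIdeal_singleton_iff] at hf
  simpa [show eval ![a, b] f = 0 from hf] using sub_eval_mem a b s h0 h1 f

lemma two_eq : ((2 : R)) = C (2 : ℂ) := (map_ofNat C 2).symm

lemma half_two : (C ((1:ℂ)/2) * 2 : R) = 1 := by
  rw [two_eq, ← map_mul]; norm_num

lemma mem_I_of_twelve (q A B : R) (h : A * P₁ + B * P₂ = 12 * q) : q ∈ I := by
  have h12 : (12 : R) * q ∈ I := Ideal.mem_span_pair.mpr ⟨A, B, h⟩
  have e : (C ((12 : ℂ))⁻¹ : R) * (12 * q) = q := by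
    rw [← mul_assoc, show ((12 : R)) = C (12 : ℂ) from (map_ofNat C 12).symm, ← map_mul]
    norm_num
  rw [← e]; exact Ideal.mul_mem_left _ _ h12

noncomputable def mA : Ideal R := Ideal.span {X 0, X 1}
noncomputable def mB : Ideal R := Ideal.span {X 0, 2 * X 1 + 1}
noncomputable def mC : Ideal R := Ideal.span {2 * X 0 + 1, X 1}
noncomputable def mD : Ideal R := Ideal.span {2 * X 0 - 1, 2 * X 1 - 1}

noncomputable def vA : Ideal R := vanishingIdeal ℂ ({![0, 0]} : Set (Fin 2 → ℂ))
noncomputable def vB : Ideal R := vanishingIdeal ℂ ({![0, -(1/2)]} : Set (Fin 2 → ℂ))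
noncomputable def vC : Ideal R := vanishingIdeal ℂ ({![-(1/2), 0]} : Set (Fin 2 → ℂ))
noncomputable def vD : Ideal R := vanishingIdeal ℂ ({![1/2, 1/2]} : Set (Fin 2 → ℂ))

lemma hA : vA ≤ mA := by
  refine vi_le 0 0 _ ?_ ?_ <;>
    simpa using Ideal.subset_span (by simp : _ ∈ ({X 0, X 1} : Set R))

lemma hB : vB ≤ mB := by
  refine vi_le 0 (-(1/2)) _ ?_ ?_
  · simpa using Ideal.subset_span (by simp : (X 0 : R) ∈ ({X 0, 2 * X 1 + 1} : Set R))
  · have hg : (2 * X 1 + 1 : R) ∈ Ideal.span ({X 0, 2 * X 1 + 1} : Set R) :=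
      Ideal.subset_span (by simp)
    have e : (X 1 - C (-(1/2) : ℂ) : R) = C ((1:ℂ)/2) * (2 * X 1 + 1) := by
      rw [map_neg]
      linear_combination (-(X 1 : R)) * half_two
    rw [e]; exact Ideal.mul_mem_left _ _ hg

lemma hC : vC ≤ mC := by
  refine vi_le (-(1/2)) 0 _ ?_ ?_
  · have hg : (2 * X 0 + 1 : R) ∈ Ideal.span ({2 * X 0 + 1, X 1} : Set R) :=
      Ideal.subset_span (by simp)
    have e : (X 0 - C (-(1/2) : ℂ) : R) = C ((1:ℂ)/2) * (2 * X 0 + 1) := by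
      rw [map_neg]
      linear_combination (-(X 0 : R)) * half_two
    rw [e]; exact Ideal.mul_mem_left _ _ hg
  · simpa using Ideal.subset_span (by simp : (X 1 : R) ∈ ({2 * X 0 + 1, X 1} : Set R))

lemma hD : vD ≤ mD := by
  refine vi_le (1/2) (1/2) _ ?_ ?_
  · have hg : (2 * X 0 - 1 : R) ∈ Ideal.span ({2 * X 0 - 1, 2 * X 1 - 1} : Set R) :=
      Ideal.subset_span (by simp)
    have e : (X 0 - C ((1/2) : ℂ) : R) = C ((1:ℂ)/2) * (2 * X 0 - 1) := by
      linear_combination (-(X 0 : R)) * half_two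
    rw [e]; exact Ideal.mul_mem_left _ _ hg
  · have hg : (2 * X 1 - 1 : R) ∈ Ideal.span ({2 * X 0 - 1, 2 * X 1 - 1} : Set R) :=
      Ideal.subset_span (by simp)
    have e : (X 1 - C ((1/2) : ℂ) : R) = C ((1:ℂ)/2) * (2 * X 1 - 1) := by
      linear_combination (-(X 1 : R)) * half_two
    rw [e]; exact Ideal.mul_mem_left _ _ hg

lemma sup_top {A B : Ideal R} (u w : R) (hu : u ∈ A) (hw : w ∈ B) (h : u + w = 1) :
    A ⊔ B = ⊤ := by
  rw [Ideal.eq_top_iff_one, ← h]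
  exact Submodule.add_mem_sup hu hw

lemma copmul {A B K : Ideal R} (h1 : A ⊔ K = ⊤) (h2 : B ⊔ K = ⊤) : (A * B) ⊔ K = ⊤ :=
  Ideal.isCoprime_iff_sup_eq.mp
    ((Ideal.isCoprime_iff_sup_eq.mpr h1).mul_left (Ideal.isCoprime_iff_sup_eq.mpr h2))

lemma sAB : vA ⊔ vB = ⊤ := by
  refine sup_top (-(2 * X 1)) (2 * X 1 + 1) ?_ ?_ (by ring) <;>
    · simp only [vA, vB, vC, vD, mem_vanishingIdeal_singleton_iff]; simp

lemma sAC : vA ⊔ vC = ⊤ := by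
  refine sup_top (-(2 * X 0)) (2 * X 0 + 1) ?_ ?_ (by ring) <;>
    · simp only [vA, vB, vC, vD, mem_vanishingIdeal_singleton_iff]; simp

lemma sAD : vA ⊔ vD = ⊤ := by
  refine sup_top (2 * X 0) (1 - 2 * X 0) ?_ ?_ (by ring) <;>
    · simp only [vA, vB, vC, vD, mem_vanishingIdeal_singleton_iff]; simp

lemma sBC : vB ⊔ vC = ⊤ := by
  refine sup_top (2 * X 1 + 1) (-(2 * X 1)) ?_ ?_ (by ring) <;>
    · simp only [vA, vB, vC, vD, mem_vanishingIdeal_singleton_iff]; simp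

lemma sBD : vB ⊔ vD = ⊤ := by
  refine sup_top (2 * X 0) (1 - 2 * X 0) ?_ ?_ (by ring) <;>
    · simp only [vA, vB, vC, vD, mem_vanishingIdeal_singleton_iff]; simp

lemma sCD : vC ⊔ vD = ⊤ := by
  refine sup_top (2 * X 1) (1 - 2 * X 1) ?_ ?_ (by ring) <;>
    · simp only [vA, vB, vC, vD, mem_vanishingIdeal_singleton_iff]; simp

lemma prod_le : mA * mB * mC * mD ≤ I := by
  rw [mA, mB, mC, mD,
      show ({X 0, X 1} : Set R) = insert (X 0) {X 1} from rfl, Ideal.span_insert,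
      show ({X 0, 2 * X 1 + 1} : Set R) = insert (X 0) {2 * X 1 + 1} from rfl, Ideal.span_insert,
      show ({2 * X 0 + 1, X 1} : Set R) = insert (2 * X 0 + 1) {X 1} from rfl, Ideal.span_insert,
      show ({2 * X 0 - 1, 2 * X 1 - 1} : Set R) = insert (2 * X 0 - 1) {2 * X 1 - 1} from rfl,
      Ideal.span_insert]
  simp only [Ideal.mul_sup, Ideal.sup_mul, Ideal.span_singleton_mul_span_singleton, sup_le_iff,
    Ideal.span_singleton_le_iff_mem]
  refine ⟨⟨⟨⟨?_, ?_⟩, ?_, ?_⟩, ⟨?_, ?_⟩, ?_, ?_⟩, ⟨⟨?_, ?_⟩, ?_, ?_⟩, ⟨?_, ?_⟩, ?_, ?_⟩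
  -- order of goals (python idx): 0,8,4,12,2,10,6,14,1,9,5,13,3,11,7,15
  · exact mem_I_of_twelve _ (-16*X 1 - 32*(X 1)^2 - 12*X 0 + 48*(X 0*X 1) + 24*(X 0)^2)
      (16*X 0 - 64*(X 0*X 1)) (by simp only [P₁, P₂]; ring)
  · exact mem_I_of_twelve _ (-12*X 1 - 16*(X 1)^2 + 24*(X 0*X 1))
      (-32*(X 0*X 1)) (by simp only [P₁, P₂]; ring)
  · exact mem_I_of_twelve _ (-12 - 40*X 1 - 32*(X 1)^2 + 24*X 0 + 48*(X 0*X 1))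
      (-32*X 0 - 64*(X 0*X 1)) (by simp only [P₁, P₂]; ring)
  · exact mem_I_of_twelve _ (-24*X 1 - 16*(X 1)^2)
      (-12 - 24*X 0 - 32*(X 0*X 1)) (by simp only [P₁, P₂]; ring)
  · exact mem_I_of_twelve _ (-4*X 1 - 8*(X 1)^2 + 12*(X 0*X 1))
      (4*X 0 - 16*(X 0*X 1)) (by simp only [P₁, P₂]; ring)
  · exact mem_I_of_twelve _ (-4*(X 1)^2) (-8*(X 0*X 1)) (by simp only [P₁, P₂]; ring)
  · exact mem_I_of_twelve _ (-4*X 1 - 8*(X 1)^2)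
      (-8*X 0 - 16*(X 0*X 1)) (by simp only [P₁, P₂]; ring)
  · exact mem_I_of_twelve _ (-16*(X 1)^2) (-12*X 1 - 8*(X 0*X 1)) (by simp only [P₁, P₂]; ring)
  · exact mem_I_of_twelve _ (-8*X 1 - 16*(X 1)^2 - 12*X 0 + 24*(X 0*X 1))
      (8*X 0 - 32*(X 0*X 1)) (by simp only [P₁, P₂]; ring)
  · exact mem_I_of_twelve _ (-12*X 1 - 8*(X 1)^2) (-16*(X 0*X 1)) (by simp only [P₁, P₂]; ring)
  · exact mem_I_of_twelve _ (-12 - 32*X 1 - 16*(X 1)^2)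
      (-16*X 0 - 32*(X 0*X 1)) (by simp only [P₁, P₂]; ring)
  · exact mem_I_of_twelve _ (-48*X 1 - 32*(X 1)^2)
      (-12 + 24*X 1 - 24*X 0 - 16*(X 0*X 1)) (by simp only [P₁, P₂]; ring)
  · exact mem_I_of_twelve _ (-2*X 1 - 4*(X 1)^2) (2*X 0 - 8*(X 0*X 1))
      (by simp only [P₁, P₂]; ring)
  · exact mem_I_of_twelve _ (-8*(X 1)^2) (-4*(X 0*X 1)) (by simp only [P₁, P₂]; ring)
  · exact mem_I_of_twelve _ (-8*X 1 - 16*(X 1)^2) (-4*X 0 - 8*(X 0*X 1))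
      (by simp only [P₁, P₂]; ring)
  · exact mem_I_of_twelve _ (-32*(X 1)^2) (-12*X 1 + 24*(X 1)^2 - 16*(X 0*X 1))
      (by simp only [P₁, P₂]; ring)

lemma pt_mem (x : Fin 2 → ℂ) (h1 : eval x P₁ = 0) (h2 : eval x P₂ = 0) :
    x ∈ zeroLocus ℂ I := by
  rw [I, zeroLocus_span]
  rintro p (rfl | rfl)
  exacts [h1, h2]

lemma van_le : vanishingIdeal ℂ (zeroLocus ℂ I) ≤ vA ⊓ vB ⊓ vC ⊓ vD := by
  refine le_inf (le_inf (le_inf ?_ ?_) ?_) ?_ <;>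
    refine vanishingIdeal_anti_mono (Set.singleton_subset_iff.mpr (pt_mem _ ?_ ?_)) <;>
    · simp [P₁, P₂] <;> norm_num

lemma radical_le : Ideal.radical I ≤ I := by
  rw [← vanishingIdeal_zeroLocus_eq_radical (K := ℂ)]
  refine le_trans van_le ?_
  have e1 : vA * vB = vA ⊓ vB := Ideal.mul_eq_inf_of_coprime sAB
  have e2 : vA * vB * vC = vA ⊓ vB ⊓ vC := by
    rw [Ideal.mul_eq_inf_of_coprime (copmul sAC sBC), e1]
  have e3 : vA * vB * vC * vD = vA ⊓ vB ⊓ vC ⊓ vD := by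
    rw [Ideal.mul_eq_inf_of_coprime (copmul (copmul sAD sBD) sCD), e2]
  rw [← e3]
  exact le_trans (Ideal.mul_mono (Ideal.mul_mono (Ideal.mul_mono hA hB) hC) hD) prod_le

end Stmt4Aux

/-- The ideal ⟨t₁(2t₁ − 4t₂ + 1), t₂(2t₂ − 4t₁ + 1)⟩ of ℂ[t₁,t₂] is a radical ideal. -/
theorem stmt_4 :
    (Ideal.span {t₁ * (2 * t₁ - 4 * t₂ + 1),
      t₂ * (2 * t₂ - 4 * t₁ + 1)}).IsRadical := by
  have : Stmt4Aux.I.IsRadical := by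
    rw [← Ideal.radical_eq_iff]
    exact le_antisymm Stmt4Aux.radical_le Ideal.le_radical
  have e : Stmt4Aux.I = Ideal.span {t₁ * (2 * t₁ - 4 * t₂ + 1),
      t₂ * (2 * t₂ - 4 * t₁ + 1)} := by
    rw [Stmt4Aux.I, Stmt4Aux.P₁, Stmt4Aux.P₂, t₁, t₂]
  rwa [e] at this
end
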